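/- arXiv:2203.12585 — 5 statements merged into one kernel-verified Lean document; each statement's English description precedes it below -/
import Mathlib

section
/- Let S ⊆ ω₁ ∩ Ω be a stationary set and η̄ = ⟨η_δ : δ ∈ S⟩ an S-ladder system such that ran(η_δ) ⊆ Ω for every δ ∈ S. If η̄ has ℵ₀-uniformization, then every S-ladder system η̄* very similar to η̄ also has ℵ₀-uniformization. -/
noncomputable section
open Classical Set Pointwise

/-- The first uncountable ordinal. -/
noncomputable def omega1 : Ordinal := (Cardinal.aleph 1).ord

/-- A club (closed unbounded) subset of ω₁. -/
def IsClubOmega1 (C : Set Ordinal) : Prop :=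
  C ⊆ Set.Iio omega1 ∧
  (∀ α < omega1, ∃ β ∈ C, α < β) ∧
  (∀ α < omega1, Order.IsSuccLimit α → (∀ β < α, ∃ γ ∈ C, β < γ ∧ γ < α) → α ∈ C)

/-- A stationary subset of ω₁. -/
def IsStationaryOmega1 (S : Set Ordinal) : Prop :=
  S ⊆ Set.Iio omega1 ∧ ∀ C, IsClubOmega1 C → (S ∩ C).Nonempty

/-- `η` is an `S`-ladder system: for each `δ ∈ S`, `η δ` is a strictly increasing
ω-sequence of ordinals below `δ` with supremum `δ`. -/
def IsLadderSystem (S : Set Ordinal) (η : Ordinal → ℕ → Ordinal) : Prop :=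
  ∀ δ ∈ S, StrictMono (η δ) ∧ (∀ n, η δ n < δ) ∧ ∀ β < δ, ∃ n, β < η δ n

/-- The ladder system `η` on `S` has ℵ₀-uniformization: every colouring
`⟨c_δ : δ ∈ S⟩` (where `c δ n` is the colour of `η δ n`) is uniformized by a single
function `f` on ω₁, up to a finite error on each ladder. -/
def HasUnif (S : Set Ordinal) (η : Ordinal → ℕ → Ordinal) : Prop :=
  ∀ c : Ordinal → ℕ → ℕ, ∃ f : Ordinal → ℕ, ∀ δ ∈ S, ∃ N : ℕ, ∀ n ≥ N, f (η δ n) = c δ n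

/-- Two `S`-ladder systems are very similar. -/
def VerySimilar (S : Set Ordinal) (η1 η2 : Ordinal → ℕ → Ordinal) : Prop :=
  ∀ δ ∈ S, ∃ k1 k2 : ℕ,
    {β : Ordinal | ∃ n, β = η1 δ (k1 + n) + Ordinal.omega0} =
    {β : Ordinal | ∃ n, β = η2 δ (k2 + n) + Ordinal.omega0}

private lemma aux_add_omega0 (β : Ordinal) :
    β + Ordinal.omega0 = Ordinal.omega0 * (β / Ordinal.omega0 + 1) := by
  conv_lhs => rw [← Ordinal.div_add_mod β Ordinal.omega0]
  rw [add_assoc, Ordinal.add_omega0 (Ordinal.mod_lt β Ordinal.omega0_ne_zero), mul_add_one]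

private lemma aux1 {α β : Ordinal} (hα : Order.IsSuccLimit α) (h : β < α) :
    β + Ordinal.omega0 ≤ α := by
  obtain ⟨hne, q, rfl⟩ := Ordinal.isSuccLimit_iff_omega0_dvd.1 hα
  rw [aux_add_omega0]
  apply mul_le_mul_right
  rw [Ordinal.add_one_eq_succ, Order.succ_le_iff, Ordinal.div_lt Ordinal.omega0_ne_zero]
  exact h

private lemma aux2 {l β : Ordinal} (hl : Order.IsSuccLimit l)
    (h : l + Ordinal.omega0 = β + Ordinal.omega0) :
    Ordinal.omega0 * (β / Ordinal.omega0) = l := by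
  obtain ⟨hne, p, rfl⟩ := Ordinal.isSuccLimit_iff_omega0_dvd.1 hl
  rw [aux_add_omega0, aux_add_omega0, Ordinal.mul_div_cancel p Ordinal.omega0_ne_zero] at h
  have h2 := (mul_left_cancel_iff_of_pos Ordinal.omega0_pos).1 h
  rw [Ordinal.add_one_eq_succ, Ordinal.add_one_eq_succ, Order.succ_eq_succ_iff] at h2
  rw [← h2]

/-- Lemma: if an `S`-ladder system `η` running through limit ordinals has
ℵ₀-uniformization, then so does every `S`-ladder system very similar to it. -/
theorem uniformization_of_verySimilar (S : Set Ordinal) (hS : IsStationaryOmega1 S)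
    (hlim : ∀ δ ∈ S, Order.IsSuccLimit δ)
    (η : Ordinal → ℕ → Ordinal) (hη : IsLadderSystem S η)
    (hran : ∀ δ ∈ S, ∀ n, Order.IsSuccLimit (η δ n))
    (hunif : HasUnif S η)
    (ηs : Ordinal → ℕ → Ordinal) (hηs : IsLadderSystem S ηs)
    (hsim : VerySimilar S η ηs) :
    HasUnif S ηs := by
  classical
  intro cs
  -- the finite offset of β above its "limit part"
  have hidx0 : ∀ β : Ordinal, ∃ n : ℕ, β % Ordinal.omega0 = (n : Ordinal) :=
    fun β => Ordinal.lt_omega0.1 (Ordinal.mod_lt β Ordinal.omega0_ne_zero)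
  set idx : Ordinal → ℕ := fun β => (hidx0 β).choose with hidxdef
  have hdecomp : ∀ β : Ordinal,
      Ordinal.omega0 * (β / Ordinal.omega0) + (idx β : Ordinal) = β := by
    intro β
    have hspec := (hidx0 β).choose_spec
    show Ordinal.omega0 * (β / Ordinal.omega0) + ((hidx0 β).choose : Ordinal) = β
    rw [← hspec]
    exact Ordinal.div_add_mod β Ordinal.omega0
  -- bound on offsets: only finitely many rungs of ηs lie in [η δ n, η δ n + ω)
  have hK0 : ∀ δ ∈ S, ∀ n : ℕ, ∃ K : ℕ,
      ∀ m (i : ℕ), ηs δ m = η δ n + (i : Ordinal) → i < K := by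
    intro δ hδ n
    obtain ⟨n', hn'⟩ := (hη δ hδ).2.2 (η δ n) ((hη δ hδ).2.1 n)
    have hωle : η δ n + Ordinal.omega0 ≤ η δ n' := aux1 (hran δ hδ n') hn'
    obtain ⟨m0, hm0⟩ := (hηs δ hδ).2.2 (η δ n') ((hη δ hδ).2.1 n')
    set o : ℕ → ℕ := fun m =>
      if h : ∃ i : ℕ, ηs δ m = η δ n + (i : Ordinal) then h.choose else 0 with ho
    refine ⟨(Finset.range (m0 + 1)).sup o + 1, ?_⟩
    intro m i him
    have hmlt : ηs δ m < η δ n + Ordinal.omega0 := by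
      rw [him]; exact add_lt_add_right (Ordinal.nat_lt_omega0 i) _
    have hmle : m ≤ m0 := by
      by_contra hcon
      push_neg at hcon
      have h1 : ηs δ m0 < ηs δ m := (hηs δ hδ).1 hcon
      exact absurd hmlt (not_lt.2 (hωle.trans (hm0.trans h1).le))
    have hex : ∃ i : ℕ, ηs δ m = η δ n + (i : Ordinal) := ⟨i, him⟩
    have hoi : o m = i := by
      rw [ho]
      simp only [dif_pos hex]
      have h2 : η δ n + (i : Ordinal) = η δ n + (hex.choose : Ordinal) :=
        him.symm.trans hex.choose_spec
      exact_mod_cast ((add_right_inj _).1 h2).symm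
    have : o m ≤ (Finset.range (m0 + 1)).sup o :=
      Finset.le_sup (Finset.mem_range.2 (Nat.lt_succ_of_le hmle))
    omega
  -- choose the bound
  set K : Ordinal → ℕ → ℕ := fun δ n =>
    if h : ∃ K : ℕ, ∀ m (i : ℕ), ηs δ m = η δ n + (i : Ordinal) → i < K
    then h.choose else 0 with hKdef
  have hK : ∀ δ ∈ S, ∀ (m n i : ℕ), ηs δ m = η δ n + (i : Ordinal) → i < K δ n := by
    intro δ hδ m n i h
    have hex := hK0 δ hδ n
    rw [hKdef]
    simp only [dif_pos hex]
    exact hex.choose_spec m i h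
  -- the colouring on η: pack all colours of ηs-rungs in [η δ n, η δ n + ω) into a list
  set g : Ordinal → ℕ → ℕ → ℕ := fun δ n i =>
    if h : ∃ m, ηs δ m = η δ n + (i : Ordinal) then cs δ h.choose else 0 with hg
  obtain ⟨f, hf⟩ := hunif fun δ n => Encodable.encode ((List.range (K δ n)).map (g δ n))
  refine ⟨fun β =>
    (((Encodable.decode (f (Ordinal.omega0 * (β / Ordinal.omega0))) :
      Option (List ℕ)).getD []).getD (idx β) 0), ?_⟩
  intro δ hδ
  obtain ⟨N, hN⟩ := hf δ hδ
  obtain ⟨k1, k2, hsets⟩ := hsim δ hδ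
  obtain ⟨m1, hm1⟩ := (hηs δ hδ).2.2 (η δ N) ((hη δ hδ).2.1 N)
  refine ⟨max m1 k2, ?_⟩
  intro m hm
  have hmemR : ηs δ m + Ordinal.omega0 ∈
      {β : Ordinal | ∃ n, β = ηs δ (k2 + n) + Ordinal.omega0} :=
    ⟨m - k2, by rw [Nat.add_sub_cancel' (le_trans (le_max_right m1 k2) hm)]⟩
  rw [← hsets] at hmemR
  obtain ⟨n0, hn0⟩ := hmemR
  set n := k1 + n0 with hn
  set β := ηs δ m with hβ
  have hlam : Ordinal.omega0 * (β / Ordinal.omega0) = η δ n := aux2 (hran δ hδ n) hn0.symm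
  have hβeq : η δ n + (idx β : Ordinal) = β := by rw [← hlam]; exact hdecomp β
  have hnN : N ≤ n := by
    by_contra hcon
    push_neg at hcon
    have h1 : β < η δ n + Ordinal.omega0 := by
      conv_lhs => rw [← hβeq]
      exact add_lt_add_right (Ordinal.nat_lt_omega0 _) _
    have h2 : η δ n + Ordinal.omega0 ≤ η δ N := aux1 (hran δ hδ N) ((hη δ hδ).1 hcon)
    have h3 : η δ N < β :=
      lt_of_lt_of_le hm1 ((hηs δ hδ).1.monotone (le_trans (le_max_left m1 k2) hm))
    exact absurd (lt_of_lt_of_le h1 h2) (not_lt.2 h3.le)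
  have hfval : f (η δ n) = Encodable.encode ((List.range (K δ n)).map (g δ n)) := hN n hnN
  have hidxK : idx β < K δ n := hK δ hδ m n (idx β) hβeq.symm
  show (((Encodable.decode (f (Ordinal.omega0 * (β / Ordinal.omega0))) :
      Option (List ℕ)).getD []).getD (idx β) 0) = cs δ m
  rw [hlam, hfval, Encodable.encodek, Option.getD_some,
    List.getD_eq_getElem _ _ (by simpa using hidxK), List.getElem_map, List.getElem_range]
  have hex : ∃ m', ηs δ m' = η δ n + ((idx β : ℕ) : Ordinal) := ⟨m, hβeq.symm⟩
  rw [hg]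
  simp only [dif_pos hex]
  congr 1
  exact (hηs δ hδ).1.injective (hex.choose_spec.trans hβeq)
end
end

section
/- Let H₀ ≤ H₁ be free abelian groups of finite rank such that H₀ is a pure subgroup of H₁, and suppose that {g₀, g₁, …, g_{n-1}} ⊆ H₁ is independent over H₀ and the pure closure of H₀ ∪ {g_i : i < n} in H₁ equals H₁. Then there exist elements g*_i (i < n) with g*_i belonging to the pure closure of H₀ ∪ {g_j : j ≤ i}, such that H₁ = H₀ ⊕ (⊕_{i<n} ℤg*_i). -/
noncomputable section
open Classical Set

universe u

/-- `H` is a pure subgroup of `G`. -/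
def IsPureSubgroup {G : Type u} [AddCommGroup G] (H : AddSubgroup G) : Prop :=
  ∀ (g : G) (n : ℤ), n ≠ 0 → n • g ∈ H → g ∈ H

/-- The pure closure of a subset `A` of an abelian group: all `x` such that `n • x`
lies in the subgroup generated by `A` for some `n > 0`. -/
def pureClosure {G : Type u} [AddCommGroup G] (A : Set G) : Set G :=
  {x | ∃ n : ℤ, 0 < n ∧ n • x ∈ AddSubgroup.closure A}

/-- A finite family `g` is independent over the subgroup `K`: no nontrivial
ℤ-linear combination of the `g i` lies in `K`. -/
def FinIndepOver {G : Type u} [AddCommGroup G] (K : AddSubgroup G) {n : ℕ}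
    (g : Fin n → G) : Prop :=
  ∀ c : Fin n → ℤ, (∑ i, c i • g i) ∈ K → ∀ i, c i = 0

lemma mem_pureClosure_iff {G : Type u} [AddCommGroup G] (A : Set G) (x : G) :
    x ∈ pureClosure A ↔ ∃ m : ℤ, m ≠ 0 ∧ m • x ∈ Submodule.span ℤ A := by
  constructor
  · rintro ⟨m, hm, hmem⟩
    refine ⟨m, hm.ne', ?_⟩
    rw [← Submodule.span_int_eq_addSubgroupClosure] at hmem
    exact hmem
  · rintro ⟨m, hm, hmem⟩
    rcases hm.lt_or_gt with h | h
    · refine ⟨-m, by omega, ?_⟩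
      rw [← Submodule.span_int_eq_addSubgroupClosure]
      show (-m) • x ∈ Submodule.span ℤ A
      rw [neg_smul]
      exact neg_mem hmem
    · refine ⟨m, h, ?_⟩
      rw [← Submodule.span_int_eq_addSubgroupClosure]
      exact hmem

lemma exists_cyclic_gen {R : Type v} [CommRing R] [IsDomain R] [IsPrincipalIdealRing R]
    {N : Type u} [AddCommGroup N] [Module R N]
    [Module.Finite R N] [Module.Free R N] [NoZeroSMulDivisors R N]
    (Q : Submodule R N) (q : N) (hqQ : q ∈ Q) (hq0 : q ≠ 0)
    (hdiv : ∀ x ∈ Q, ∃ m c : R, m ≠ 0 ∧ m • x = c • q) :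
    ∃ u ∈ Q, ∀ x ∈ Q, ∃! c : R, x = c • u := by
  haveI : IsNoetherian R N := isNoetherian_of_isNoetherianRing_of_finite R N
  haveI : Module.Finite R Q := Module.Finite.iff_fg.2 (IsNoetherian.noetherian Q)
  haveI : NoZeroSMulDivisors R Q := by
    constructor
    intro c x h
    rcases smul_eq_zero.1 (show c • (x : N) = 0 by
      have := congrArg (Subtype.val) h; push_cast at this; exact this) with h' | h'
    · exact Or.inl h'
    · exact Or.inr (Subtype.ext h')
  haveI : Module.Free R Q := Module.free_of_finite_type_torsion_free'
  set ι := Module.Free.ChooseBasisIndex R Q with hι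
  let b : Module.Basis ι R Q := Module.Free.chooseBasis R Q
  set qQ : Q := ⟨q, hqQ⟩ with hqQdef
  have hsub : ∀ i₀ i₁ : ι, i₀ = i₁ := by
    intro i₀ i₁
    by_contra hne
    obtain ⟨m₀, c₀, hm₀, h₀⟩ := hdiv (b i₀ : N) (b i₀).2
    obtain ⟨m₁, c₁, hm₁, h₁⟩ := hdiv (b i₁ : N) (b i₁).2
    have h₀' : m₀ • b i₀ = c₀ • qQ := by
      apply Subtype.ext; push_cast [h₀]; rfl
    have h₁' : m₁ • b i₁ = c₁ • qQ := by
      apply Subtype.ext; push_cast [h₁]; rfl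
    have key : (c₁ * m₀) • b i₀ = (c₀ * m₁) • b i₁ := by
      rw [mul_smul, mul_smul, h₀', h₁']
      exact smul_comm _ _ _
    have hrepr := congrArg (fun z => b.repr z i₀) key
    simp only [map_smul, Module.Basis.repr_self, Finsupp.smul_single, smul_eq_mul, mul_one,
      Finsupp.single_apply, if_pos rfl, if_neg (Ne.symm hne)] at hrepr
    have hc₁ : c₁ = 0 := by
      rcases mul_eq_zero.1 hrepr with h | h
      · exact h
      · exact absurd h hm₀
    have h3 : m₁ • b i₁ = 0 := by rw [h₁', hc₁, zero_smul]
    have h4 : b i₁ = 0 := by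
      rcases smul_eq_zero.1 h3 with h | h
      · exact absurd h hm₁
      · exact h
    exact b.ne_zero i₁ h4
  have hne : Nonempty ι := by
    by_contra hempty
    haveI : IsEmpty ι := not_nonempty_iff.1 hempty
    have : qQ = 0 := by
      have := b.repr.injective (Subsingleton.elim (b.repr qQ) (b.repr 0))
      simpa using this
    exact hq0 (by simpa [hqQdef] using congrArg (Subtype.val) this)
  obtain ⟨i₀⟩ := hne
  haveI : Subsingleton ι := ⟨hsub⟩
  haveI : Unique ι := ⟨⟨i₀⟩, fun j => hsub j i₀⟩
  have hbne : (b i₀ : N) ≠ 0 := by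
    intro h
    exact b.ne_zero i₀ (Subtype.ext h)
  have hform : ∀ x : N, ∀ hx : x ∈ Q, x = b.repr ⟨x, hx⟩ i₀ • (b i₀ : N) := by
    intro x hx
    have hsum := b.sum_repr ⟨x, hx⟩
    rw [Fintype.sum_unique] at hsum
    have hd : (default : ι) = i₀ := Subsingleton.elim _ _
    rw [hd] at hsum
    calc x = ((⟨x, hx⟩ : Q) : N) := rfl
    _ = ((b.repr ⟨x, hx⟩ i₀ • b i₀ : Q) : N) := by rw [hsum]
    _ = b.repr ⟨x, hx⟩ i₀ • (b i₀ : N) := by push_cast; rfl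
  refine ⟨(b i₀ : N), (b i₀).2, ?_⟩
  intro x hx
  refine ⟨b.repr ⟨x, hx⟩ i₀, hform x hx, ?_⟩
  intro c hc
  by_contra hcc
  have h5 : (c - b.repr ⟨x, hx⟩ i₀) • (b i₀ : N) = 0 := by
    rw [sub_smul, ← hc, ← hform x hx, sub_self]
  rcases smul_eq_zero.1 h5 with h | h
  · exact hcc (sub_eq_zero.1 h)
  · exact hbne h

section Mods

variable {H1 : Type u} [AddCommGroup H1] (H0 : AddSubgroup H1) {n : ℕ} (g : Fin n → H1)

def Mk (k : ℕ) : Submodule ℤ H1 :=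
  Submodule.span ℤ ((H0 : Set H1) ∪ g '' {j | (j : ℕ) < k})

def Pk (k : ℕ) : Submodule ℤ H1 where
  carrier := {x | ∃ m : ℤ, m ≠ 0 ∧ m • x ∈ Mk H0 g k}
  zero_mem' := ⟨1, one_ne_zero, by simp⟩
  add_mem' := by
    rintro a b ⟨m, hm, ha⟩ ⟨l, hl, hb⟩
    refine ⟨m * l, mul_ne_zero hm hl, ?_⟩
    have h1 : (m * l) • (a + b) = l • (m • a) + m • (l • b) := by
      module
    rw [h1]
    exact add_mem (Submodule.smul_mem _ _ ha) (Submodule.smul_mem _ _ hb)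
  smul_mem' := by
    rintro c a ⟨m, hm, ha⟩
    refine ⟨m, hm, ?_⟩
    rw [smul_comm]
    exact Submodule.smul_mem _ _ ha

lemma mem_Pk {k : ℕ} {x : H1} :
    x ∈ Pk H0 g k ↔ ∃ m : ℤ, m ≠ 0 ∧ m • x ∈ Mk H0 g k := Iff.rfl

lemma Mk_le_Pk (k : ℕ) : Mk H0 g k ≤ Pk H0 g k :=
  fun x hx => ⟨1, one_ne_zero, by simpa using hx⟩

lemma Pk_mono {k l : ℕ} (h : k ≤ l) : Pk H0 g k ≤ Pk H0 g l := by
  rintro x ⟨m, hm, hx⟩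
  refine ⟨m, hm, Submodule.span_mono ?_ hx⟩
  exact Set.union_subset_union_right _ (Set.image_mono (fun j hj => lt_of_lt_of_le hj h))

lemma H0_le_Pk (k : ℕ) : ∀ x ∈ H0, x ∈ Pk H0 g k := by
  intro x hx
  exact Mk_le_Pk H0 g k (Submodule.subset_span (Or.inl hx))

lemma Pk_saturated {k : ℕ} {x : H1} {m : ℤ} (hm : m ≠ 0) (hx : m • x ∈ Pk H0 g k) :
    x ∈ Pk H0 g k := by
  obtain ⟨l, hl, hlx⟩ := hx
  exact ⟨l * m, mul_ne_zero hl hm, by rwa [mul_smul]⟩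

lemma Pk_zero (hpure : IsPureSubgroup H0) (x : H1) : x ∈ Pk H0 g 0 ↔ x ∈ H0 := by
  constructor
  · rintro ⟨m, hm, hx⟩
    have hempty : {j : Fin n | (j : ℕ) < 0} = ∅ := by ext j; simp
    rw [Mk, hempty, Set.image_empty, Set.union_empty] at hx
    have : m • x ∈ H0 := by
      rw [← Submodule.span_int_eq H0]
      exact hx
    exact hpure x m hm this
  · intro hx
    exact H0_le_Pk H0 g 0 x hx

lemma quot_torsionfree (k : ℕ) : NoZeroSMulDivisors ℤ (H1 ⧸ Pk H0 g k) := by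
  constructor
  intro m x hmx
  by_cases hm : m = 0
  · exact Or.inl hm
  · right
    obtain ⟨y, rfl⟩ := Submodule.Quotient.mk_surjective _ x
    rw [← Submodule.Quotient.mk_smul, Submodule.Quotient.mk_eq_zero] at hmx
    rw [Submodule.Quotient.mk_eq_zero]
    exact Pk_saturated H0 g hm hmx

lemma Mk_succ {k : ℕ} (hk : k < n) :
    Mk H0 g (k + 1) = Submodule.span ℤ {g ⟨k, hk⟩} ⊔ Mk H0 g k := by
  have hset : {j : Fin n | (j : ℕ) < k + 1} = insert ⟨k, hk⟩ {j : Fin n | (j : ℕ) < k} := by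
    ext j
    simp only [Set.mem_setOf_eq, Set.mem_insert_iff, Fin.ext_iff]
    omega
  rw [Mk, hset, Set.image_insert_eq, Set.union_insert, Submodule.span_insert]
  rfl

lemma g_not_mem_Pk (hindep : FinIndepOver H0 g) {k : ℕ} (hk : k < n) :
    g ⟨k, hk⟩ ∉ Pk H0 g k := by
  intro hmem0
  obtain ⟨m, hm, hmem⟩ := (mem_Pk H0 g).1 hmem0
  rw [Mk, Submodule.span_union] at hmem
  obtain ⟨a, ha, b, hb, hab⟩ := Submodule.mem_sup.1 hmem
  have haH0 : a ∈ H0 := by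
    rw [← Submodule.span_int_eq H0]
    exact ha
  rw [Finsupp.mem_span_image_iff_linearCombination] at hb
  obtain ⟨l, hl, rfl⟩ := hb
  set K : Fin n := ⟨k, hk⟩ with hK
  set c : Fin n → ℤ := fun j => (if j = K then m else 0) - l j with hc
  have hlin : Finsupp.linearCombination ℤ g l = ∑ j, l j • g j := by
    rw [Finsupp.linearCombination_apply, Finsupp.sum_fintype]
    intro j; rw [zero_smul]
  have hsum : ∑ j, c j • g j = a := by
    simp only [hc, sub_smul, ite_smul, zero_smul, Finset.sum_sub_distrib]
    rw [Finset.sum_ite_eq' Finset.univ K (fun j => m • g j)]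
    simp only [Finset.mem_univ, if_pos]
    rw [← hlin, ← hab]
    abel
  have hcK := hindep c (hsum ▸ haH0) K
  have hlK : l K = 0 := by
    by_contra hlK
    have : K ∈ {j : Fin n | (j : ℕ) < k} := hl (Finsupp.mem_support_iff.2 hlK)
    simp [hK] at this
  rw [hc] at hcK
  simp only [if_pos rfl, hlK, sub_zero] at hcK
  exact hm hcK

lemma step_gen [Module.Finite ℤ H1] [Module.Free ℤ H1]
    (hindep : FinIndepOver H0 g) {k : ℕ} (hk : k < n) :
    ∃ w ∈ Pk H0 g (k + 1), ∀ x ∈ Pk H0 g (k + 1),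
      ∃! c : ℤ, (Pk H0 g k).mkQ x = c • (Pk H0 g k).mkQ w := by
  haveI := quot_torsionfree H0 g k
  haveI : Module.Finite ℤ (H1 ⧸ Pk H0 g k) := inferInstance
  haveI : Module.Free ℤ (H1 ⧸ Pk H0 g k) := Module.free_of_finite_type_torsion_free'
  set K : Fin n := ⟨k, hk⟩ with hKdef
  set π := (Pk H0 g k).mkQ with hπ
  set Q := (Pk H0 g (k + 1)).map π with hQ
  have hgk1 : g K ∈ Pk H0 g (k + 1) := by
    apply Mk_le_Pk
    apply Submodule.subset_span
    exact Or.inr ⟨K, by simp [hKdef], rfl⟩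
  have hqQ : π (g K) ∈ Q := ⟨g K, hgk1, rfl⟩
  have hq0 : π (g K) ≠ 0 := by
    intro h
    rw [hπ, Submodule.mkQ_apply, Submodule.Quotient.mk_eq_zero] at h
    exact g_not_mem_Pk H0 g hindep hk h
  have hdiv : ∀ x ∈ Q, ∃ m c : ℤ, m ≠ 0 ∧ m • x = c • π (g K) := by
    rintro x ⟨y, hy, rfl⟩
    obtain ⟨m, hm, hmy⟩ := (mem_Pk H0 g).1 hy
    rw [Mk_succ H0 g hk] at hmy
    obtain ⟨b, hb, a, ha, hab⟩ := Submodule.mem_sup.1 hmy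
    obtain ⟨c, rfl⟩ := Submodule.mem_span_singleton.1 hb
    refine ⟨m, c, hm, ?_⟩
    have hπa : π a = 0 := by
      rw [hπ, Submodule.mkQ_apply, Submodule.Quotient.mk_eq_zero]
      exact Mk_le_Pk H0 g k ha
    calc m • π y = π (m • y) := (map_smul π m y).symm
    _ = π (c • g K) + π a := by rw [← hab, map_add]
    _ = c • π (g K) := by rw [hπa, add_zero, map_smul]
  obtain ⟨u, huQ, hu⟩ := exists_cyclic_gen Q (π (g K)) hqQ hq0 hdiv
  obtain ⟨w, hw, rfl⟩ := huQ
  exact ⟨w, hw, fun x hx => hu (π x) ⟨x, hx, rfl⟩⟩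

end Mods

/-- Fact: if `H₀` is a pure subgroup of the finite rank free abelian group `H₁`,
`g₀, …, g_{n-1}` are independent over `H₀`, and `H₁` is the pure closure of
`H₀ ∪ {g i : i < n}`, then there are `g*_i` in the pure closure of
`H₀ ∪ {g j : j ≤ i}` with `H₁ = H₀ ⊕ (⊕_{i<n} ℤ g*_i)`. -/
theorem pure_finite_corank_splits (H1 : Type u) [AddCommGroup H1]
    (hfree1 : Module.Free ℤ H1) (hfin1 : Module.Finite ℤ H1)
    (H0 : AddSubgroup H1)
    (hfree0 : Module.Free ℤ H0) (hfin0 : Module.Finite ℤ H0)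
    (hpure : IsPureSubgroup H0)
    (n : ℕ) (g : Fin n → H1) (hindep : FinIndepOver H0 g)
    (hg : pureClosure ((H0 : Set H1) ∪ Set.range g) = Set.univ) :
    ∃ gs : Fin n → H1,
      (∀ i : Fin n, gs i ∈ pureClosure ((H0 : Set H1) ∪ g '' {j | j ≤ i})) ∧
      ∀ x : H1, ∃! p : H0 × (Fin n → ℤ), x = (p.1 : H1) + ∑ i, p.2 i • gs i := by
  haveI := hfree1
  haveI := hfin1
  have key : ∀ i : Fin n, ∃ w ∈ Pk H0 g ((i : ℕ) + 1), ∀ x ∈ Pk H0 g ((i : ℕ) + 1),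
      ∃! c : ℤ, (Pk H0 g (i : ℕ)).mkQ x = c • (Pk H0 g (i : ℕ)).mkQ w :=
    fun i => step_gen H0 g hindep i.isLt
  choose gs hgs1 hgs2 using key
  have hmem : ∀ i : Fin n, gs i ∈ pureClosure ((H0 : Set H1) ∪ g '' {j | j ≤ i}) := by
    intro i
    have hset : {j : Fin n | j ≤ i} = {j : Fin n | (j : ℕ) < (i : ℕ) + 1} := by
      ext j
      simp only [Set.mem_setOf_eq, Fin.le_def]
      omega
    rw [hset, mem_pureClosure_iff]
    exact (mem_Pk H0 g).1 (hgs1 i)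
  have hTop : ∀ x : H1, x ∈ Pk H0 g n := by
    intro x
    have hx : x ∈ pureClosure ((H0 : Set H1) ∪ Set.range g) := by
      rw [hg]; trivial
    rw [mem_pureClosure_iff] at hx
    rw [mem_Pk]
    have hr : g '' {j : Fin n | (j : ℕ) < n} = Set.range g := by
      have h2 : {j : Fin n | (j : ℕ) < n} = (Set.univ : Set (Fin n)) := by
        ext j
        simpa using j.isLt
      rw [h2, Set.image_univ]
    rw [Mk, hr]
    exact hx
  -- existence
  have ex : ∀ k : ℕ, k ≤ n → ∀ x ∈ Pk H0 g k, ∃ (h : H0) (c : Fin n → ℤ),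
      (∀ j : Fin n, k ≤ (j : ℕ) → c j = 0) ∧ x = (h : H1) + ∑ i, c i • gs i := by
    intro k
    induction k with
    | zero =>
      intro _ x hx
      refine ⟨⟨x, (Pk_zero H0 g hpure x).1 hx⟩, 0, fun j _ => rfl, ?_⟩
      simp
    | succ k ih =>
      intro hk1 x hx
      have hk : k < n := hk1
      set K : Fin n := ⟨k, hk⟩ with hKdef
      obtain ⟨c₀, hc₀, -⟩ := hgs2 K x hx
      have hy : x - c₀ • gs K ∈ Pk H0 g k := by
        rw [← map_smul, Submodule.mkQ_apply, Submodule.mkQ_apply,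
          Submodule.Quotient.eq] at hc₀
        exact hc₀
      obtain ⟨h, c, hsupp, heq⟩ := ih (Nat.le_of_succ_le hk1) (x - c₀ • gs K) hy
      have hcK : c K = 0 := hsupp K (le_refl k)
      refine ⟨h, fun j => if j = K then c₀ else c j, ?_, ?_⟩
      · intro j hj
        have hjK : j ≠ K := by
          intro h'
          rw [h'] at hj
          simp only [hKdef] at hj
          omega
        show (if j = K then c₀ else c j) = 0
        rw [if_neg hjK]
        exact hsupp j (by omega)
      · have hs : ∑ i, (if i = K then c₀ else c i) • gs i
            = (∑ i, c i • gs i) + c₀ • gs K := by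
          have h1 : ∀ i, (if i = K then c₀ else c i) = c i + (if i = K then c₀ else 0) := by
            intro i
            by_cases h' : i = K
            · rw [if_pos h', if_pos h', h', hcK, zero_add]
            · rw [if_neg h', if_neg h', add_zero]
          simp_rw [h1, add_smul, Finset.sum_add_distrib]
          congr 1
          rw [Finset.sum_eq_single K]
          · rw [if_pos rfl]
          · intro i _ hiK
            rw [if_neg hiK, zero_smul]
          · intro hK
            exact absurd (Finset.mem_univ K) hK
        rw [hs, ← add_assoc, ← heq]
        abel
  -- zero decomposition is trivial
  have zer : ∀ k : ℕ, k ≤ n → ∀ (h : H0) (c : Fin n → ℤ),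
      (∀ j : Fin n, k ≤ (j : ℕ) → c j = 0) → (h : H1) + ∑ i, c i • gs i = 0 →
      (h : H1) = 0 ∧ ∀ j, c j = 0 := by
    intro k
    induction k with
    | zero =>
      intro _ h c hsupp heq
      have hz : ∀ j, c j = 0 := fun j => hsupp j (Nat.zero_le _)
      have hs : ∑ i, c i • gs i = 0 :=
        Finset.sum_eq_zero fun i _ => by rw [hz i, zero_smul]
      rw [hs, add_zero] at heq
      exact ⟨heq, hz⟩
    | succ k ih =>
      intro hk1 h c hsupp heq
      have hk : k < n := hk1
      set K : Fin n := ⟨k, hk⟩ with hKdef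
      set π := (Pk H0 g k).mkQ with hπ
      have hπh : π (h : H1) = 0 := by
        rw [hπ, Submodule.mkQ_apply, Submodule.Quotient.mk_eq_zero]
        exact H0_le_Pk H0 g k _ h.2
      have hπgs : ∀ i : Fin n, (i : ℕ) < k → π (gs i) = 0 := by
        intro i hi
        rw [hπ, Submodule.mkQ_apply, Submodule.Quotient.mk_eq_zero]
        exact Pk_mono H0 g hi (hgs1 i)
      have hsum : π (∑ i, c i • gs i) = c K • π (gs K) := by
        rw [map_sum]
        rw [Finset.sum_eq_single K]
        · rw [map_smul]
        · intro i _ hiK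
          rcases lt_or_ge (i : ℕ) k with h' | h'
          · rw [map_smul, hπgs i h', smul_zero]
          · have hik : (i : ℕ) ≠ k := fun hh => hiK (Fin.ext hh)
            rw [hsupp i (by omega), zero_smul, map_zero]
        · intro hK
          exact absurd (Finset.mem_univ K) hK
      have h0 : c K • π (gs K) = 0 := by
        have h1 := congrArg π heq
        rw [map_add, hπh, zero_add, hsum, map_zero] at h1
        exact h1
      obtain ⟨c', hc', huniq⟩ := hgs2 K 0 (Submodule.zero_mem _)
      have hcK : c K = 0 := by
        have h1 := huniq (c K) (by
          show (Pk H0 g k).mkQ 0 = c K • (Pk H0 g k).mkQ (gs K)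
          rw [map_zero]
          exact h0.symm)
        have h2 := huniq 0 (by
          show (Pk H0 g k).mkQ 0 = (0 : ℤ) • (Pk H0 g k).mkQ (gs K)
          rw [map_zero, zero_smul])
        rw [h1, ← h2]
      refine ih (Nat.le_of_succ_le hk1) h c ?_ heq
      intro j hj
      rcases eq_or_lt_of_le hj with h' | h'
      · have hjK : j = K := Fin.ext h'.symm
        rw [hjK]
        exact hcK
      · exact hsupp j h'
  refine ⟨gs, hmem, ?_⟩
  intro x
  obtain ⟨h, c, -, heq⟩ := ex n le_rfl x (hTop x)
  refine ⟨(h, c), heq, ?_⟩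
  rintro ⟨h', c'⟩ heq'
  have hdiff : ((h' - h : H0) : H1) + ∑ i, (c' i - c i) • gs i = 0 := by
    have hthis : (h' : H1) + ∑ i, c' i • gs i = (h : H1) + ∑ i, c i • gs i := by
      rw [← heq', ← heq]
    push_cast
    simp only [sub_smul, Finset.sum_sub_distrib]
    rw [sub_add_sub_comm, hthis, sub_self]
  obtain ⟨hh, hc⟩ := zer n le_rfl (h' - h) (fun i => c' i - c i)
    (fun j hj => absurd j.isLt (by omega)) hdiff
  have hh' : h' = h := by
    apply Subtype.ext
    have : (h' : H1) - (h : H1) = 0 := by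
      push_cast at hh
      exact hh
    exact sub_eq_zero.1 this
  have hc'' : c' = c := funext fun j => sub_eq_zero.1 (hc j)
  rw [Prod.mk.injEq]
  exact ⟨hh', hc''⟩
end
end

section
/- Let η̄ be an S-ladder system on a stationary set S ⊆ ω₁ of limit ordinals, and suppose η̄ has ℵ₀-uniformization. Then there exist a sequence m̄ = ⟨m_δ : δ ∈ S⟩ of natural numbers and a system ν̄ = ⟨ν_α : α < ω₁⟩ such that: each ν_α is a finite strictly increasing sequence of ordinals < α; and, setting η'_δ(n) = η_δ(n + m_δ), for every δ ∈ S and n < ω one has ν_{η'_δ(n)} = η'_δ ↾ n. -/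
noncomputable section
open Classical Set Pointwise

/- ### Auxiliary material for the proof -/

/-- `Iio α` is countable for `α < ω₁`. -/
lemma aux_countable_Iio {α : Ordinal} (h : α < omega1) : (Set.Iio α).Countable := by
  have h1 : α.card < Cardinal.aleph 1 := Cardinal.lt_ord.mp h
  rw [Cardinal.countable_iff_lt_aleph_one, Ordinal.mk_Iio_ordinal,
    ← not_le, Cardinal.aleph_one_le_lift, not_le]
  exact h1

/-- mapping by a function injective on a set is injective on lists valued in the set -/
lemma aux_map_injOn {A : Set Ordinal} {e : Ordinal → ℕ} (he : Set.InjOn e A) :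
    ∀ s t : List Ordinal, (∀ β ∈ s, β ∈ A) → (∀ β ∈ t, β ∈ A) → s.map e = t.map e → s = t := by
  intro s
  induction s with
  | nil => intro t _ _ h; cases t <;> simp_all
  | cons a s ih =>
    intro t hs ht h
    cases t with
    | nil => simp_all
    | cons b t =>
      simp only [List.map_cons, List.cons.injEq] at h
      have hab : a = b := he (hs a (by simp)) (ht b (by simp)) h.1
      have := ih t (fun β hβ => hs β (by simp [hβ])) (fun β hβ => ht β (by simp [hβ])) h.2
      simp [hab, this]

/-- A coding of pairs (n, bounded list) into ℕ, injective at each `α < ω₁`. -/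
lemma aux_exists_code : ∃ E : Ordinal → ℕ → List Ordinal → ℕ,
    ∀ α < omega1, ∀ (n n' : ℕ) (s s' : List Ordinal),
      (∀ β ∈ s, β < α) → (∀ β ∈ s', β < α) → E α n s = E α n' s' → n = n' ∧ s = s' := by
  have key : ∀ α : Ordinal, α < omega1 → ∃ Eα : ℕ → List Ordinal → ℕ,
      ∀ (n n' : ℕ) (s s' : List Ordinal),
        (∀ β ∈ s, β < α) → (∀ β ∈ s', β < α) → Eα n s = Eα n' s' → n = n' ∧ s = s' := by
    intro α hα
    have hc : (Set.Iio α).Countable := aux_countable_Iio hα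
    have : Countable (Set.Iio α) := hc.to_subtype
    obtain ⟨g, hg⟩ := (countable_iff_exists_injective (Set.Iio α)).mp this
    set e : Ordinal → ℕ := fun β => if hb : β ∈ Set.Iio α then g ⟨β, hb⟩ else 0 with he_def
    have he : Set.InjOn e (Set.Iio α) := by
      intro x hx y hy hxy
      simp only [he_def, dif_pos hx, dif_pos hy] at hxy
      exact Subtype.mk_eq_mk.mp (hg hxy)
    refine ⟨fun n s => Nat.pair n (Encodable.encode (s.map e)), ?_⟩
    intro n n' s s' hs hs' h
    obtain ⟨h1, h2⟩ := Nat.pair_eq_pair.mp h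
    refine ⟨h1, aux_map_injOn he s s' hs hs' (Encodable.encode_injective h2)⟩
  choose Eα hEα using key
  refine ⟨fun α => if h : α < omega1 then Eα α h else fun _ _ => 0, ?_⟩
  intro α hα n n' s s' hs hs' h
  simp only [dif_pos hα] at h
  exact hEα α hα n n' s s' hs hs' h

/-- Claim: from ℵ₀-uniformization one gets, after removing an initial segment
`m_δ` from each ladder, a coherent system `ν̄` of finite increasing sequences with
`ν_{η'_δ(n)} = η'_δ ↾ n` where `η'_δ(n) = η_δ(n + m_δ)`. -/
theorem coherent_initial_segments (S : Set Ordinal) (hS : IsStationaryOmega1 S)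
    (hlim : ∀ δ ∈ S, Order.IsSuccLimit δ)
    (η : Ordinal → ℕ → Ordinal) (hη : IsLadderSystem S η)
    (hunif : HasUnif S η) :
    ∃ (m : Ordinal → ℕ) (ν : Ordinal → List Ordinal),
      (∀ α : Ordinal, (ν α).Pairwise (· < ·) ∧ ∀ β ∈ ν α, β < α) ∧
      ∀ δ ∈ S, ∀ n : ℕ,
        ν (η δ (n + m δ)) = (List.range n).map fun j => η δ (j + m δ) := by
  classical
  obtain ⟨E, hE⟩ := aux_exists_code
  -- the colouring: the colour of η δ n codes (n, η δ ↾ n)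
  set c : Ordinal → ℕ → ℕ := fun δ n => E (η δ n) n ((List.range n).map (η δ)) with hc_def
  obtain ⟨f, hf⟩ := hunif c
  -- m δ : the least good starting point
  set m : Ordinal → ℕ := fun δ => if h : δ ∈ S then Nat.find (hf δ h) else 0 with hm_def
  -- the predicate used to recover m δ from local data
  set Q : ℕ × List Ordinal → ℕ → Prop := fun p j =>
    ∀ i, j ≤ i → i < p.1 → f (p.2.getD i 0) = E (p.2.getD i 0) i (p.2.take i) with hQ_def
  have hQex : ∀ p : ℕ × List Ordinal, ∃ j, Q p j :=
    fun p => ⟨p.1, fun i h1 h2 => absurd h2 (not_lt.mpr h1)⟩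
  set P : Ordinal → Prop := fun α => ∃ p : ℕ × List Ordinal,
    (∀ β ∈ p.2, β < α) ∧ p.2.Pairwise (· < ·) ∧ f α = E α p.1 p.2 with hP_def
  set ν : Ordinal → List Ordinal := fun α =>
    if h : P α then (Classical.choose h).2.drop (Nat.find (hQex (Classical.choose h))) else []
    with hν_def
  refine ⟨m, ν, ?_, ?_⟩
  · -- sortedness and boundedness
    intro α
    by_cases h : P α
    · have hch := Classical.choose_spec h
      have hνα : ν α = (Classical.choose h).2.drop (Nat.find (hQex (Classical.choose h))) := by
        simp only [hν_def, dif_pos h]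
      rw [hνα]
      constructor
      · exact List.Pairwise.sublist (List.drop_sublist _ _) hch.2.1
      · intro β hβ
        exact hch.1 β ((List.drop_sublist _ _).mem hβ)
    · have hνα : ν α = [] := by simp only [hν_def, dif_neg h]
      simp [hνα]
  · -- the main coherence property
    intro δ hδ n
    obtain ⟨hmono, hlt, -⟩ := hη δ hδ
    have hmδ : m δ = Nat.find (hf δ hδ) := by simp only [hm_def, dif_pos hδ]
    set M := Nat.find (hf δ hδ) with hM_def
    set k := n + M with hk_def
    set α := η δ k with hα_def
    set s₀ : List Ordinal := (List.range k).map (η δ) with hs₀_def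
    have hαω : α < omega1 := lt_trans (hlt k) (hS.1 hδ)
    have hbound : ∀ β ∈ s₀, β < α := by
      intro β hβ
      simp only [hs₀_def, List.mem_map, List.mem_range] at hβ
      obtain ⟨j, hj, rfl⟩ := hβ
      exact hmono hj
    have hsort : s₀.Pairwise (· < ·) :=
      (List.pairwise_lt_range (n := k)).map (η δ) (fun a b hab => hmono hab)
    have hgood : ∀ i ≥ M, f (η δ i) = c δ i := Nat.find_spec (hf δ hδ)
    have hfk : f α = E α k s₀ := hgood k (Nat.le_add_left M n)
    have hP : P α := ⟨(k, s₀), hbound, hsort, hfk⟩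
    have hνα : ν α = (Classical.choose hP).2.drop (Nat.find (hQex (Classical.choose hP))) := by
      simp only [hν_def, dif_pos hP]
    -- the chosen pair is (k, s₀)
    have hch : Classical.choose hP = (k, s₀) := by
      have hsp := Classical.choose_spec hP
      have := hE α hαω (Classical.choose hP).1 k (Classical.choose hP).2 s₀
        hsp.1 hbound (hsp.2.2.symm.trans hfk)
      exact Prod.ext this.1 this.2
    -- computing entries of s₀
    have hlen : s₀.length = k := by simp [hs₀_def]
    have hgetD : ∀ i, i < k → s₀.getD i 0 = η δ i := by
      intro i hi
      rw [List.getD_eq_getElem s₀ 0 (by rwa [hlen])]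
      simp [hs₀_def]
    have htake : ∀ i, i ≤ k → s₀.take i = (List.range i).map (η δ) := by
      intro i hi
      rw [hs₀_def, ← List.map_take, List.take_range, min_eq_left hi]
    -- the recovered index equals M
    have hfind : Nat.find (hQex (k, s₀)) = M := by
      rw [Nat.find_eq_iff]
      constructor
      · intro i h1 h2
        rw [hgetD i h2, htake i (le_of_lt h2)]
        exact hgood i h1
      · intro j hj hQj
        have hM1 : M - 1 < M := by omega
        have hnot := Nat.find_min (hf δ hδ) (show M - 1 < M from hM1)
        push_neg at hnot
        obtain ⟨i, hi1, hi2⟩ := hnot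
        have hiM : i = M - 1 := by
          by_contra hne
          have : i ≥ M := by omega
          exact hi2 (hgood i this)
        subst hiM
        have h1 : j ≤ M - 1 := by omega
        have h2 : M - 1 < k := by omega
        have := hQj (M - 1) h1 h2
        rw [hgetD _ h2, htake _ (le_of_lt h2)] at this
        exact hi2 this
    -- put it together
    have : ν α = s₀.drop M := by rw [hνα, hch, hfind]
    rw [hmδ, ← hk_def, ← hα_def, this]
    -- finally: drop M of (range (n+M)).map (η δ) is the shifted segment
    rw [hs₀_def, hk_def, Nat.add_comm n M, List.range_add, List.map_append, List.map_map]
    have hlen2 : ((List.range M).map (η δ)).length = M := by simp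
    rw [List.drop_left' hlen2]
    congr 1
    ext j
    simp [Function.comp, Nat.add_comm]
end
end

section
/- Let η̄ be an S-ladder system on a stationary set S ⊆ ω₁ of limit ordinals, and suppose η̄ has ℵ₀-uniformization. Then there exist a sequence m̄ = ⟨m_δ : δ ∈ S⟩ of natural numbers and a sequence Ā = ⟨A_n : n < ω⟩ such that Ā is a (η̄ − m̄)-rank, where η̄ − m̄ is the S-ladder system defined by (η̄−m̄)_δ(n) = η_δ(n + m_δ). -/
noncomputable section
open Classical Set Pointwise

/-- A club (closed unbounded) subset of ω₁. -/
def IsClub' (C : Set Ordinal) : Prop :=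
  C ⊆ Set.Iio omega1 ∧
  (∀ α < omega1, ∃ β ∈ C, α < β) ∧
  (∀ α < omega1, Order.IsSuccLimit α → (∀ β < α, ∃ γ ∈ C, β < γ ∧ γ < α) → α ∈ C)

/-- A stationary subset of ω₁. -/
def IsStationary' (S : Set Ordinal) : Prop :=
  S ⊆ Set.Iio omega1 ∧ ∀ C, IsClub' C → (S ∩ C).Nonempty

/-- `A` is an `η̄`-rank for the ladder system `η` on `S`: a partition of
`S ∪ ⋃_{δ∈S} ran(η_δ)` such that ladders of points of `A n` lie in `A (n+1)`. -/
def IsLadderRank (S : Set Ordinal) (η : Ordinal → ℕ → Ordinal)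
    (A : ℕ → Set Ordinal) : Prop :=
  (∀ m n : ℕ, m ≠ n → Disjoint (A m) (A n)) ∧
  ((⋃ n, A n) = S ∪ ⋃ δ ∈ S, Set.range (η δ)) ∧
  (∀ n : ℕ, ∀ δ ∈ S, δ ∈ A n → Set.range (η δ) ⊆ A (n + 1))

/-!  Auxiliary machinery for the proof.

The key point is to construct, from ℵ₀-uniformization alone, a function
`e : Ordinal → ℕ` together with trims `m : Ordinal → ℕ` such that
`e (η δ (k)) = e δ + 1` for every `δ ∈ S` and every `k ≥ m δ`.
The sets `A n := {x ∈ U | e x = n}` then form a rank.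

Construction:
* `Lv` uniformizes the colouring `c δ n = n` ("positions").
* `F2` uniformizes `c δ n = ⟨n, Lv δ⟩`; hence, beyond the trims, every point `y`
  on a kept ladder knows the level `Lv p` of any parent `p` that keeps it, so all
  keeping parents of `y` share one level `lam y < Lv y`.
* For each level `ℓ` we uniformize the colouring `c p n = ⟨n, e p⟩` where `e` is
  already defined on levels `< ℓ` (the function is clipped to those levels).
  A point `y` kept by parents of the common level `lam y` reads off the shared
  value `e p` from the `(lam y + 1)`-st uniformizer and sets `e y := e p + 1`.
  This is a well-founded recursion on levels since `lam y < Lv y` on kept points.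
-/

namespace LRP

variable {S : Set Ordinal} {η : Ordinal → ℕ → Ordinal}

/-- A chosen uniformizer for the colouring `c`. -/
noncomputable def uf (h : HasUnif S η) (c : Ordinal → ℕ → ℕ) : Ordinal → ℕ :=
  (h c).choose

theorem uf_spec (h : HasUnif S η) (c : Ordinal → ℕ → ℕ) :
    ∀ δ ∈ S, ∃ N : ℕ, ∀ n ≥ N, uf h c (η δ n) = c δ n :=
  (h c).choose_spec

/-- A chosen trim for the uniformizer of `c` at `δ`. -/
noncomputable def tr (h : HasUnif S η) (c : Ordinal → ℕ → ℕ) (δ : Ordinal) : ℕ :=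
  if hδ : δ ∈ S then (uf_spec h c δ hδ).choose else 0

theorem tr_spec (h : HasUnif S η) (c : Ordinal → ℕ → ℕ) {δ : Ordinal} (hδ : δ ∈ S)
    {n : ℕ} (hn : tr h c δ ≤ n) : uf h c (η δ n) = c δ n := by
  have h2 := (uf_spec h c δ hδ).choose_spec
  apply h2
  unfold tr at hn
  rwa [dif_pos hδ] at hn

/-- The position colouring. -/
def c1 : Ordinal → ℕ → ℕ := fun _ n => n

/-- The level function: uniformizes positions. -/
noncomputable def Lv (h : HasUnif S η) : Ordinal → ℕ := uf h c1

/-- The colouring transmitting the parent's level. -/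
noncomputable def c2 (h : HasUnif S η) : Ordinal → ℕ → ℕ :=
  fun δ n => Nat.pair n (Lv h δ)

noncomputable def F2 (h : HasUnif S η) : Ordinal → ℕ := uf h (c2 h)

/-- The common level of the keeping parents of `y`. -/
noncomputable def lam (h : HasUnif S η) (y : Ordinal) : ℕ := (Nat.unpair (F2 h y)).2

/-- Basic trim: beyond it, positions and parent-levels are transmitted, and
levels strictly increase along kept edges. -/
noncomputable def m2 (h : HasUnif S η) (δ : Ordinal) : ℕ :=
  max (tr h c1 δ) (max (tr h (c2 h) δ) (Lv h δ + 1))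

/-- The colouring transmitting the value `f δ`. -/
def colOf (f : Ordinal → ℕ) : Ordinal → ℕ → ℕ := fun δ n => Nat.pair n (f δ)

/-- `f` clipped to levels `< i`. -/
noncomputable def clip (h : HasUnif S η) (f : Ordinal → ℕ) (i : ℕ) : Ordinal → ℕ :=
  fun x => if Lv h x < i then f x else 0

/-- The final trim of `p`, relative to a candidate rank function `f`. -/
noncomputable def mOf (h : HasUnif S η) (f : Ordinal → ℕ) (p : Ordinal) : ℕ :=
  max (m2 h p) (tr h (colOf (clip h f (Lv h p + 1))) p)

/-- `y` lies on the kept (trimmed) part of some ladder. -/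
def KeptOf (h : HasUnif S η) (f : Ordinal → ℕ) (y : Ordinal) : Prop :=
  ∃ p, p ∈ S ∧ ∃ k, mOf h f p ≤ k ∧ y = η p k

/-- The recursion body: a kept point reads its value off the uniformizer for the
call of its parents' common level. -/
noncomputable def bodyOf (h : HasUnif S η) (f : Ordinal → ℕ) (y : Ordinal) : ℕ :=
  if KeptOf h f y then
    (Nat.unpair (uf h (colOf (clip h f (lam h y + 1))) y)).2 + 1
  else 0

/-- Level-by-level recursion computing the rank function. -/
noncomputable def eAux (h : HasUnif S η) : ℕ → Ordinal → ℕ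
  | 0 => fun _ => 0
  | (j+1) => fun y => if Lv h y = j then bodyOf h (eAux h j) y else eAux h j y

/-- The rank function. -/
noncomputable def rkF (h : HasUnif S η) (y : Ordinal) : ℕ := eAux h (Lv h y + 1) y

theorem eAux_stable (h : HasUnif S η) :
    ∀ j x, Lv h x < j → eAux h j x = rkF h x := by
  intro j
  induction j with
  | zero => intro x hx; omega
  | succ j ih =>
    intro x hx
    by_cases hxe : Lv h x = j
    · have h1 : rkF h x = eAux h (j+1) x := by unfold rkF; rw [hxe]
      rw [h1]
    · have hlt : Lv h x < j := by omega
      have h1 : eAux h (j+1) x = eAux h j x := by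
        show (if Lv h x = j then bodyOf h (eAux h j) x else eAux h j x) = eAux h j x
        rw [if_neg hxe]
      rw [h1]
      exact ih x hlt

theorem clip_stable (h : HasUnif S η) {i j : ℕ} (hij : i ≤ j) :
    clip h (eAux h j) i = clip h (rkF h) i := by
  funext x
  unfold clip
  by_cases hx : Lv h x < i
  · rw [if_pos hx, if_pos hx]
    exact eAux_stable h j x (lt_of_lt_of_le hx hij)
  · rw [if_neg hx, if_neg hx]

theorem lv_eta (h : HasUnif S η) {p : Ordinal} {k : ℕ} (hp : p ∈ S)
    (hk : m2 h p ≤ k) : Lv h (η p k) = k := by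
  have htr : tr h c1 p ≤ k := le_trans (le_max_left _ _) hk
  have := tr_spec h c1 hp htr
  unfold Lv
  rw [this]
  rfl

theorem f2_eta (h : HasUnif S η) {p : Ordinal} {k : ℕ} (hp : p ∈ S)
    (hk : m2 h p ≤ k) : F2 h (η p k) = Nat.pair k (Lv h p) := by
  have htr : tr h (c2 h) p ≤ k :=
    le_trans (le_trans (le_max_left _ _) (le_max_right _ _)) hk
  have := tr_spec h (c2 h) hp htr
  unfold F2
  rw [this]
  rfl

theorem lam_eta (h : HasUnif S η) {p : Ordinal} {k : ℕ} (hp : p ∈ S)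
    (hk : m2 h p ≤ k) : lam h (η p k) = Lv h p := by
  unfold lam
  rw [f2_eta h hp hk, Nat.unpair_pair]

theorem lv_lt (h : HasUnif S η) {p : Ordinal} {k : ℕ} (hp : p ∈ S)
    (hk : m2 h p ≤ k) : Lv h p < Lv h (η p k) := by
  rw [lv_eta h hp hk]
  have h1 : Lv h p + 1 ≤ m2 h p :=
    le_trans (le_max_right _ _) (le_max_right _ _)
  omega

theorem kept_dest (h : HasUnif S η) {f : Ordinal → ℕ} {y : Ordinal}
    (hK : KeptOf h f y) :
    ∃ p, p ∈ S ∧ ∃ k, mOf h f p ≤ k ∧ y = η p k ∧ Lv h p < Lv h y ∧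
      lam h y = Lv h p ∧ Lv h y = k := by
  obtain ⟨p, hp, k, hmk, hy⟩ := hK
  have hk2 : m2 h p ≤ k := le_trans (le_max_left _ _) hmk
  subst hy
  exact ⟨p, hp, k, hmk, rfl, lv_lt h hp hk2, lam_eta h hp hk2, lv_eta h hp hk2⟩

theorem mOf_congr (h : HasUnif S η) {f g : Ordinal → ℕ} {p : Ordinal}
    (hfg : clip h f (Lv h p + 1) = clip h g (Lv h p + 1)) :
    mOf h f p = mOf h g p := by
  unfold mOf
  rw [hfg]

theorem kept_iff (h : HasUnif S η) {y : Ordinal} :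
    KeptOf h (eAux h (Lv h y)) y ↔ KeptOf h (rkF h) y := by
  constructor
  · intro hK
    obtain ⟨p, hp, k, hmk, hy, hlt, _, _⟩ := kept_dest h hK
    refine ⟨p, hp, k, ?_, hy⟩
    have hcl : clip h (eAux h (Lv h y)) (Lv h p + 1) = clip h (rkF h) (Lv h p + 1) :=
      clip_stable h (by omega)
    rw [mOf_congr h hcl.symm]
    exact hmk
  · intro hK
    obtain ⟨p, hp, k, hmk, hy, hlt, _, _⟩ := kept_dest h hK
    refine ⟨p, hp, k, ?_, hy⟩
    have hcl : clip h (eAux h (Lv h y)) (Lv h p + 1) = clip h (rkF h) (Lv h p + 1) :=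
      clip_stable h (by omega)
    rw [mOf_congr h hcl]
    exact hmk

theorem body_congr (h : HasUnif S η) (y : Ordinal) :
    bodyOf h (eAux h (Lv h y)) y = bodyOf h (rkF h) y := by
  unfold bodyOf
  by_cases hK : KeptOf h (rkF h) y
  · rw [if_pos hK, if_pos ((kept_iff h).2 hK)]
    obtain ⟨p, hp, k, hmk, hy, hlt, hlam, _⟩ := kept_dest h hK
    have hcl : clip h (eAux h (Lv h y)) (lam h y + 1) = clip h (rkF h) (lam h y + 1) := by
      apply clip_stable h
      rw [hlam]
      omega
    rw [hcl]
  · rw [if_neg hK, if_neg (fun hh => hK ((kept_iff h).1 hh))]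

theorem rkF_eq_body (h : HasUnif S η) (y : Ordinal) :
    rkF h y = bodyOf h (rkF h) y := by
  have h1 : rkF h y = bodyOf h (eAux h (Lv h y)) y := by
    show (if Lv h y = Lv h y then bodyOf h (eAux h (Lv h y)) y else eAux h (Lv h y) y) = _
    rw [if_pos rfl]
  rw [h1, body_congr]

/-- The key equation: along every kept (trimmed) ladder the rank function takes
the value `rkF p + 1`. -/
theorem main_eq (h : HasUnif S η) {p : Ordinal} {k : ℕ} (hp : p ∈ S)
    (hk : mOf h (rkF h) p ≤ k) :
    rkF h (η p k) = rkF h p + 1 := by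
  have hk2 : m2 h p ≤ k := le_trans (le_max_left _ _) hk
  have hK : KeptOf h (rkF h) (η p k) := ⟨p, hp, k, hk, rfl⟩
  rw [rkF_eq_body]
  unfold bodyOf
  rw [if_pos hK]
  rw [lam_eta h hp hk2]
  have htr : tr h (colOf (clip h (rkF h) (Lv h p + 1))) p ≤ k :=
    le_trans (le_max_right _ _) hk
  rw [tr_spec h _ hp htr]
  show (Nat.unpair (Nat.pair k (clip h (rkF h) (Lv h p + 1) p))).2 + 1 = _
  rw [Nat.unpair_pair]
  show (if Lv h p < Lv h p + 1 then rkF h p else 0) + 1 = _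
  rw [if_pos (Nat.lt_succ_self _)]

end LRP

/-- Claim: from ℵ₀-uniformization, after removing an initial segment `m_δ` from each
ladder, the resulting ladder system admits a rank. -/
theorem ladder_rank_exists (S : Set Ordinal) (hS : IsStationary' S)
    (hlim : ∀ δ ∈ S, Order.IsSuccLimit δ)
    (η : Ordinal → ℕ → Ordinal) (hη : IsLadderSystem S η)
    (hunif : HasUnif S η) :
    ∃ (m : Ordinal → ℕ) (A : ℕ → Set Ordinal),
      IsLadderRank S (fun δ k => η δ (k + m δ)) A := by
  classical
  set e : Ordinal → ℕ := LRP.rkF hunif with he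
  set m : Ordinal → ℕ := fun δ => LRP.mOf hunif e δ with hm
  set U : Set Ordinal :=
    S ∪ ⋃ δ ∈ S, Set.range ((fun δ k => η δ (k + m δ)) δ) with hU
  refine ⟨m, fun n => {x | x ∈ U ∧ e x = n}, ?_, ?_, ?_⟩
  · -- disjointness
    intro i j hij
    rw [Set.disjoint_left]
    rintro x ⟨_, hxi⟩ ⟨_, hxj⟩
    exact hij (hxi ▸ hxj)
  · -- union
    ext x
    simp only [Set.mem_iUnion, Set.mem_setOf_eq]
    constructor
    · rintro ⟨n, hxU, _⟩
      exact hxU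
    · intro hxU
      exact ⟨e x, hxU, rfl⟩
  · -- rank condition
    intro n δ hδ hA
    rintro y ⟨k, rfl⟩
    constructor
    · exact Or.inr (Set.mem_iUnion₂.2 ⟨δ, hδ, ⟨k, rfl⟩⟩)
    · have hmain := LRP.main_eq hunif hδ (show LRP.mOf hunif e δ ≤ k + m δ by
        simp only [hm]; exact Nat.le_add_left _ _)
      have h2 : e δ = n := hA.2
      rw [← h2]
      exact hmain
end
end

section
/- Let p = (S, η̄, v̄, Ψ) be a very special S-uniformization problem whose ladder system η̄ has ℵ₀-uniformization. Then there exist a sequence m̄ = ⟨m_δ : δ ∈ S⟩ of natural numbers and a (p ∖ m̄)-pressed down system w̄ = ⟨w_α : α < ω₁⟩. -/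
noncomputable section
open Classical Set Pointwise

/-- The data of an `S`-uniformization problem: a set `S`, a ladder system `η` on `S`,
finite sets `u δ n ⊆ η δ n`, and for each finite set `b` of ordinals (only the basic
sets matter) a family `Ψ b` of colourings; a colouring is represented by a total
function `Ordinal → C`, where only its values on `b` are relevant. -/
structure UProblem (C : Type) where
  S : Set Ordinal
  η : Ordinal → ℕ → Ordinal
  u : Ordinal → ℕ → Finset Ordinal
  Ψ : Finset Ordinal → Set (Ordinal → C)

/-- The trace of a family `F` of colourings on a finite set `b`: the lists of values
along the increasing enumeration of `b`.  (Composition with the order isomorphism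
`OP_{b,|b|}`.) -/
def UTrace {C : Type} (b : Finset Ordinal) (F : Set (Ordinal → C)) : Set (List C) :=
  {l | ∃ f ∈ F, l = (b.sort (· ≤ ·)).map f}

namespace UProblem

variable {C : Type} (p : UProblem C)

/-- The basic set `b^δ_{n,k} = ⋃_{j ≤ n} (u_{δ,j} ∪ {η_δ(j)}) ∪ [δ, δ+k]`. -/
def basicSet (δ : Ordinal) (n k : ℕ) : Finset Ordinal :=
  ((Finset.range (n + 1)).biUnion fun j => insert (p.η δ j) (p.u δ j)) ∪
    (Finset.range (k + 1)).image fun i : ℕ => δ + (i : Ordinal)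

/-- `b` is a basic set of the problem. -/
def IsBasic (b : Finset Ordinal) : Prop :=
  ∃ δ ∈ p.S, ∃ n k : ℕ, b = p.basicSet δ n k

/-- A set `x ⊆ ω₁` is `p`-closed. -/
def Closed (x : Set Ordinal) : Prop :=
  (∀ α : Ordinal, α + 1 ∈ x → α ∈ x) ∧
  ∀ δ ∈ p.S, δ ∈ x → ∃ N : ℕ∞, 0 < N ∧ ∀ k : ℕ,
    (p.η δ k ∈ x ↔ (k : ℕ∞) < N) ∧
    ((Set.Ico (p.η δ k) (p.η δ (k + 1)) ∩ x).Nonempty → p.η δ k ∈ x) ∧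
    (p.η δ k ∈ x → ∀ β ∈ p.u δ k, β ∈ x)

/-- `Ψ⁺(v)`: the colourings whose restriction to every basic subset `b` of `v`
belongs to `Ψ(b)`. -/
def Ψplus (v : Finset Ordinal) : Set (Ordinal → C) :=
  {f | ∀ b : Finset Ordinal, p.IsBasic b → b ⊆ v → f ∈ p.Ψ b}

/-- `p` is a special `S`-uniformization problem. -/
def IsSpecial : Prop :=
  IsStationaryOmega1 p.S ∧
  (∀ δ ∈ p.S, Order.IsSuccLimit δ) ∧
  IsLadderSystem p.S p.η ∧
  (∀ δ ∈ p.S, ∀ n : ℕ, ∀ β ∈ p.u δ n, β < p.η δ n) ∧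
  (∀ b : Finset Ordinal, ∀ f g : Ordinal → C,
      (∀ α ∈ b, f α = g α) → f ∈ p.Ψ b → g ∈ p.Ψ b) ∧
  (∀ b, p.IsBasic b → (p.Ψ b).Nonempty ∧ (UTrace b (p.Ψ b)).Countable) ∧
  (∃ Υ : ℕ → Set (Set (List C)), (∀ n, (Υ n).Countable) ∧
      ∀ b, p.IsBasic b → UTrace b (p.Ψ b) ∈ Υ b.card) ∧
  (∀ v : Finset Ordinal, (p.Ψplus v).Nonempty ∧ (UTrace v (p.Ψplus v)).Countable) ∧
  (∀ b b' : Finset Ordinal, p.IsBasic b → p.IsBasic b' → b ⊆ b' →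
      ∀ f ∈ p.Ψ b', f ∈ p.Ψ b) ∧
  (∀ v w : Finset Ordinal, v ⊆ w → p.Closed ↑v → ∀ f ∈ p.Ψplus v,
      ∃ f' ∈ p.Ψplus w, ∀ α ∈ v, f' α = f α)

/-- `f` is a solution of the problem `p`. -/
def Solution (f : Ordinal → C) : Prop :=
  ∀ v : Finset Ordinal, f ∈ p.Ψplus v

/-- The problem `p` is simple: `α + ω ∉ S` for all `α`. -/
def IsSimple : Prop := ∀ α : Ordinal, α + Ordinal.omega0 ∉ p.S

end UProblem

namespace UProblem

variable {C : Type}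

/-- `p` is a very special `S`-uniformization problem, witnessed by `v`. -/
def IsVerySpecial (p : UProblem C) (v : Ordinal → Finset Ordinal) : Prop :=
  p.IsSpecial ∧
  (∀ δ ∈ p.S, ∀ n : ℕ, insert (p.η δ n) (p.u δ n) ⊆ p.u δ (n + 1)) ∧
  (∀ δ ∈ p.S, (⋃ n, (p.u δ n : Set Ordinal)) = Set.Iio δ) ∧
  (∀ α : Ordinal, ∀ β ∈ v α, β < α) ∧
  (∀ δ ∈ p.S, ∀ n : ℕ, p.u δ n = v (p.η δ n))

/-- The problem `p ∖ m̄`, obtained by removing the first `m δ` steps of each ladder.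
(On the new basic sets, `Ψ` is unchanged.) -/
def drop (p : UProblem C) (m : Ordinal → ℕ) : UProblem C where
  S := p.S
  η := fun δ n => p.η δ (n + m δ)
  u := fun δ n => p.u δ (n + m δ)
  Ψ := p.Ψ

/-- `w̄` is a `p`-pressed down system (relative to the witness `v̄`). -/
def PressedDown (p : UProblem C) (v w : Ordinal → Finset Ordinal) : Prop :=
  (∀ α : Ordinal, (∀ β ∈ w α, β < α) ∧ p.Closed ↑(w α)) ∧
  (∀ δ ∈ p.S, ∀ n : ℕ,
      v (p.η δ n) ⊆ w (p.η δ n) ∧ w (p.η δ n) ⊆ w (p.η δ (n + 1))) ∧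
  (∀ δ ∈ p.S, ∀ n : ℕ, w δ ⊆ w (p.η δ n))

end UProblem

namespace UPAux

variable {C : Type}

/-- Invariant for the closure-building process. `P` is the processed part,
`F` the frontier. -/
def Inv (q : UProblem C) (x P F : Finset Ordinal) : Prop :=
  (∀ β ∈ P ∪ F, ∃ γ ∈ x, β ≤ γ) ∧
  (∀ β ∈ F, ∀ γ ∈ P, β < γ) ∧
  (∀ β : Ordinal, β + 1 ∈ P → β ∈ P ∪ F) ∧
  (∀ δ ∈ q.S, δ ∈ P → ∃ N : ℕ, 0 < N ∧ (∀ k < N, q.η δ k ∈ P ∪ F) ∧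
    (∀ k < N, ∀ β ∈ q.u δ k, β ∈ P ∪ F) ∧
    (∀ γ ∈ P ∪ F, γ < δ → γ < q.η δ N))

lemma exists_N (q : UProblem C) {δ : Ordinal}
    (hmono : StrictMono (q.η δ)) (hub : ∀ β < δ, ∃ n, β < q.η δ n)
    (G : Finset Ordinal) :
    ∃ N : ℕ, 0 < N ∧ ∀ γ ∈ G, γ < δ → γ < q.η δ N := by
  classical
  induction G using Finset.induction_on with
  | empty => exact ⟨1, one_pos, fun γ hγ => absurd hγ (by simp)⟩
  | @insert a G ha ih =>
    obtain ⟨N, hN0, hN⟩ := ih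
    by_cases haδ : a < δ
    · obtain ⟨n, hn⟩ := hub a haδ
      refine ⟨max N (n + 1), lt_of_lt_of_le hN0 (le_max_left _ _), ?_⟩
      intro γ hγ hγδ
      rcases Finset.mem_insert.mp hγ with rfl | hγG
      · exact lt_of_lt_of_le hn (hmono.monotone (le_trans (Nat.le_succ n) (le_max_right _ _)))
      · exact lt_of_lt_of_le (hN γ hγG hγδ) (hmono.monotone (le_max_left _ _))
    · refine ⟨N, hN0, ?_⟩
      intro γ hγ hγδ
      rcases Finset.mem_insert.mp hγ with rfl | hγG
      · exact absurd hγδ haδ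
      · exact hN γ hγG hγδ

lemma run (q : UProblem C)
    (hlim : ∀ δ ∈ q.S, Order.IsSuccLimit δ)
    (hmono : ∀ δ ∈ q.S, StrictMono (q.η δ))
    (hlt : ∀ δ ∈ q.S, ∀ n, q.η δ n < δ)
    (hub : ∀ δ ∈ q.S, ∀ β < δ, ∃ n, β < q.η δ n)
    (hu : ∀ δ ∈ q.S, ∀ n, ∀ β ∈ q.u δ n, β < q.η δ n)
    (x : Finset Ordinal) (μ : Ordinal) :
    ∀ P F : Finset Ordinal, Inv q x P F → (∀ β ∈ F, β < μ) →
    ∃ Y : Finset Ordinal, P ∪ F ⊆ Y ∧ (∀ β ∈ Y, ∃ γ ∈ x, β ≤ γ) ∧ q.Closed ↑Y := by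
  induction μ using Ordinal.induction with
  | h μ IH =>
  intro P F hInv hF
  obtain ⟨inv1, inv2, inv3, inv4⟩ := hInv
  rcases F.eq_empty_or_nonempty with rfl | hFne
  · -- F empty : P is closed
    refine ⟨P, by simp, fun β hβ => inv1 β (by simpa using hβ), ?_, ?_⟩
    · -- successor clause
      intro α hα
      have := inv3 α (by simpa using hα)
      simpa using this
    · -- ladder clause
      intro δ hδS hδP
      obtain ⟨N, hN0, hNlad, hNu, hNbd⟩ := inv4 δ hδS (by simpa using hδP)
      simp only [Finset.union_empty] at hNlad hNu hNbd
      refine ⟨(N : ℕ∞), by exact_mod_cast hN0, ?_⟩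
      intro k
      have hkmem : q.η δ k ∈ P → k < N := by
        intro hk
        have h1 : q.η δ k < q.η δ N := hNbd _ hk (hlt δ hδS k)
        exact (hmono δ hδS).lt_iff_lt.mp h1
      refine ⟨?_, ?_, ?_⟩
      · constructor
        · intro hk
          exact_mod_cast hkmem (by simpa using hk)
        · intro hk
          have : k < N := by exact_mod_cast hk
          simpa using hNlad k this
      · rintro ⟨γ, ⟨hγ1, hγ2⟩, hγP⟩
        have hγδ : γ < δ := lt_trans hγ2 (hlt δ hδS (k+1))
        have hγN : γ < q.η δ N := hNbd γ (by simpa using hγP) hγδ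
        have hkN : k < N := (hmono δ hδS).lt_iff_lt.mp (lt_of_le_of_lt hγ1 hγN)
        simpa using hNlad k hkN
      · intro hk β hβ
        have hkN : k < N := hkmem (by simpa using hk)
        simpa using hNu k hkN β hβ
  · -- F nonempty : process the maximum of F
    set μ' := F.max' hFne with hμ'def
    have hμ'F : μ' ∈ F := F.max'_mem hFne
    have hμ'μ : μ' < μ := hF μ' hμ'F
    -- consequences of μ'
    obtain ⟨cons, hc1, hc2, hc3⟩ :
        ∃ cons : Finset Ordinal, (∀ β ∈ cons, β < μ') ∧
          (∀ β : Ordinal, β + 1 = μ' → β ∈ cons) ∧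
          (μ' ∈ q.S → ∃ N : ℕ, 0 < N ∧ (∀ k < N, q.η μ' k ∈ cons) ∧
            (∀ k < N, ∀ β ∈ q.u μ' k, β ∈ cons) ∧
            (∀ γ, (γ ∈ P ∪ F ∨ γ ∈ cons) → γ < μ' → γ < q.η μ' N)) := by
      by_cases hδ : μ' ∈ q.S
      · obtain ⟨N, hN0, hNbd⟩ := exists_N q (hmono μ' hδ) (hub μ' hδ) (P ∪ F)
        refine ⟨(Finset.range N).image (q.η μ') ∪ (Finset.range N).biUnion (q.u μ'),
          ?_, ?_, ?_⟩
        · intro β hβ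
          rcases Finset.mem_union.mp hβ with hβ | hβ
          · obtain ⟨k, _, rfl⟩ := Finset.mem_image.mp hβ
            exact hlt μ' hδ k
          · obtain ⟨k, _, hβk⟩ := Finset.mem_biUnion.mp hβ
            exact lt_trans (hu μ' hδ k β hβk) (hlt μ' hδ k)
        · intro β hβ
          exfalso
          have h2 := (hlim μ' hδ).succ_lt (a := β) (by rw [← hβ]; exact lt_add_one β)
          rw [Ordinal.add_one_eq_succ] at hβ
          rw [hβ] at h2; exact lt_irrefl _ h2
        · intro _
          refine ⟨N, hN0, ?_, ?_, ?_⟩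
          · intro k hk
            exact Finset.mem_union_left _ (Finset.mem_image.mpr ⟨k, Finset.mem_range.mpr hk, rfl⟩)
          · intro k hk β hβ
            exact Finset.mem_union_right _ (Finset.mem_biUnion.mpr ⟨k, Finset.mem_range.mpr hk, hβ⟩)
          · intro γ hγ hγμ
            rcases hγ with hγ | hγ
            · exact hNbd γ hγ hγμ
            · rcases Finset.mem_union.mp hγ with hγ | hγ
              · obtain ⟨k, hk, rfl⟩ := Finset.mem_image.mp hγ
                exact (hmono μ' hδ) (Finset.mem_range.mp hk)
              · obtain ⟨k, hk, hγk⟩ := Finset.mem_biUnion.mp hγ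
                exact lt_trans (hu μ' hδ k γ hγk)
                  ((hmono μ' hδ) (Finset.mem_range.mp hk))
      · refine ⟨if h : ∃ β : Ordinal, β + 1 = μ' then {h.choose} else ∅, ?_, ?_,
          fun h => absurd h hδ⟩
        · intro β hβ
          split_ifs at hβ with h
          · rw [Finset.mem_singleton.mp hβ]
            exact lt_of_lt_of_eq (lt_add_one _) h.choose_spec
          · exact absurd hβ (by simp)
        · intro β hβ
          have h : ∃ β : Ordinal, β + 1 = μ' := ⟨β, hβ⟩
          simp only [dif_pos h, Finset.mem_singleton]
          have h2 : β + 1 = h.choose + 1 := hβ.trans h.choose_spec.symm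
          rw [Ordinal.add_one_eq_succ, Ordinal.add_one_eq_succ] at h2
          exact Order.succ_injective h2
    -- new state
    set P' := insert μ' P with hP'def
    set F' := F.erase μ' ∪ cons with hF'def
    have hF'lt : ∀ β ∈ F', β < μ' := by
      intro β hβ
      rcases Finset.mem_union.mp hβ with hβ | hβ
      · exact lt_of_le_of_ne (F.le_max' β (Finset.mem_of_mem_erase hβ))
          (Finset.ne_of_mem_erase hβ)
      · exact hc1 β hβ
    have hsub : ∀ β : Ordinal, β ∈ P ∪ F → β ∈ P' ∪ F' := by
      intro β hβ
      rcases Finset.mem_union.mp hβ with hβ | hβ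
      · exact Finset.mem_union_left _ (Finset.mem_insert_of_mem hβ)
      · by_cases hβμ : β = μ'
        · exact Finset.mem_union_left _ (by rw [hβμ]; exact Finset.mem_insert_self _ _)
        · exact Finset.mem_union_right _
            (Finset.mem_union_left _ (Finset.mem_erase.mpr ⟨hβμ, hβ⟩))
    have hmem' : ∀ β : Ordinal, β ∈ P' ∪ F' → β ∈ P ∪ F ∨ β ∈ cons := by
      intro β hβ
      rcases Finset.mem_union.mp hβ with hβ | hβ
      · rcases Finset.mem_insert.mp hβ with rfl | hβ
        · exact Or.inl (Finset.mem_union_right _ hμ'F)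
        · exact Or.inl (Finset.mem_union_left _ hβ)
      · rcases Finset.mem_union.mp hβ with hβ | hβ
        · exact Or.inl (Finset.mem_union_right _ (Finset.mem_of_mem_erase hβ))
        · exact Or.inr hβ
    have hInv' : Inv q x P' F' := by
      refine ⟨?_, ?_, ?_, ?_⟩
      · intro β hβ
        rcases hmem' β hβ with hβ | hβ
        · exact inv1 β hβ
        · obtain ⟨γ, hγx, hγ⟩ := inv1 μ' (Finset.mem_union_right _ hμ'F)
          exact ⟨γ, hγx, le_of_lt (lt_of_lt_of_le (hc1 β hβ) hγ)⟩
      · intro β hβ γ hγ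
        rcases Finset.mem_insert.mp hγ with rfl | hγ
        · exact hF'lt β hβ
        · exact lt_trans (hF'lt β hβ) (inv2 μ' hμ'F γ hγ)
      · intro β hβ
        rcases Finset.mem_insert.mp hβ with hβ | hβ
        · exact Finset.mem_union_right _ (Finset.mem_union_right _ (hc2 β hβ))
        · exact hsub β (inv3 β hβ)
      · intro δ hδS hδP'
        rcases Finset.mem_insert.mp hδP' with rfl | hδP
        · obtain ⟨N, hN0, hNlad, hNu, hNbd⟩ := hc3 hδS
          refine ⟨N, hN0, ?_, ?_, ?_⟩
          · intro k hk
            exact Finset.mem_union_right _ (Finset.mem_union_right _ (hNlad k hk))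
          · intro k hk β hβ
            exact Finset.mem_union_right _ (Finset.mem_union_right _ (hNu k hk β hβ))
          · intro γ hγ hγδ
            exact hNbd γ (hmem' γ hγ) hγδ
        · obtain ⟨N, hN0, hNlad, hNu, hNbd⟩ := inv4 δ hδS hδP
          have hμ'δ : μ' < δ := inv2 μ' hμ'F δ hδP
          have hμ'N : μ' < q.η δ N :=
            hNbd μ' (Finset.mem_union_right _ hμ'F) hμ'δ
          refine ⟨N, hN0, fun k hk => hsub _ (hNlad k hk),
            fun k hk β hβ => hsub _ (hNu k hk β hβ), ?_⟩
          intro γ hγ hγδ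
          rcases hmem' γ hγ with hγ | hγ
          · exact hNbd γ hγ hγδ
          · exact lt_trans (hc1 γ hγ) hμ'N
    obtain ⟨Y, hY1, hY2, hY3⟩ := IH μ' hμ'μ P' F' hInv' hF'lt
    exact ⟨Y, fun β hβ => hY1 (hsub β hβ), hY2, hY3⟩

lemma exists_closed (q : UProblem C)
    (hlim : ∀ δ ∈ q.S, Order.IsSuccLimit δ)
    (hmono : ∀ δ ∈ q.S, StrictMono (q.η δ))
    (hlt : ∀ δ ∈ q.S, ∀ n, q.η δ n < δ)
    (hub : ∀ δ ∈ q.S, ∀ β < δ, ∃ n, β < q.η δ n)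
    (hu : ∀ δ ∈ q.S, ∀ n, ∀ β ∈ q.u δ n, β < q.η δ n)
    (x : Finset Ordinal) :
    ∃ Y : Finset Ordinal, x ⊆ Y ∧ (∀ β ∈ Y, ∃ γ ∈ x, β ≤ γ) ∧ q.Closed ↑Y := by
  have hInv : Inv q x ∅ x :=
    ⟨fun β hβ => ⟨β, by simpa using hβ, le_rfl⟩,
     fun β _ γ hγ => absurd hγ (by simp),
     fun β hβ => absurd hβ (by simp),
     fun δ _ hδ => absurd hδ (by simp)⟩
  obtain ⟨Y, hY1, hY2, hY3⟩ := run q hlim hmono hlt hub hu x (x.sup id + 1) ∅ x hInv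
    (fun β hβ => lt_of_le_of_lt (Finset.le_sup (f := id) hβ) (lt_add_one _))
  exact ⟨Y, fun β hβ => hY1 (by simpa using hβ), hY2, hY3⟩

lemma closed_sInter (q : UProblem C) (𝒮 : Set (Set Ordinal))
    (h : ∀ Y ∈ 𝒮, q.Closed Y) : q.Closed (⋂₀ 𝒮) := by
  constructor
  · intro α hα Y hY
    exact (h Y hY).1 α (hα Y hY)
  · intro δ hδS hδx
    have H : ∀ Y : 𝒮, ∃ N : ℕ∞, 0 < N ∧ ∀ k : ℕ,
        (q.η δ k ∈ (Y : Set Ordinal) ↔ (k : ℕ∞) < N) ∧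
        ((Set.Ico (q.η δ k) (q.η δ (k + 1)) ∩ (Y : Set Ordinal)).Nonempty → q.η δ k ∈ (Y : Set Ordinal)) ∧
        (q.η δ k ∈ (Y : Set Ordinal) → ∀ β ∈ q.u δ k, β ∈ (Y : Set Ordinal)) :=
      fun Y => (h Y Y.2).2 δ hδS (hδx Y Y.2)
    choose N hN0 hNk using H
    refine ⟨⨅ Y, N Y, ?_, ?_⟩
    · have h1 : (1 : ℕ∞) ≤ ⨅ Y, N Y :=
        le_iInf fun Y => ENat.one_le_iff_ne_zero.mpr (hN0 Y).ne'
      exact lt_of_lt_of_le zero_lt_one h1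
    · intro k
      refine ⟨?_, ?_, ?_⟩
      · constructor
        · intro hk
          have h1 : ((k : ℕ∞) + 1) ≤ ⨅ Y, N Y := le_iInf fun Y =>
            Order.add_one_le_of_lt ((hNk Y k).1.mp (hk Y Y.2))
          have h2 : (k : ℕ∞) < (k : ℕ∞) + 1 :=
            (ENat.lt_add_one_iff (by simp)).mpr le_rfl
          exact lt_of_lt_of_le h2 h1
        · intro hk Y hY
          exact (hNk ⟨Y, hY⟩ k).1.mpr (lt_of_lt_of_le hk (iInf_le _ _))
      · rintro ⟨γ, hγ1, hγ2⟩ Y hY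
        exact (hNk ⟨Y, hY⟩ k).2.1 ⟨γ, hγ1, hγ2 Y hY⟩
      · intro hk β hβ Y hY
        exact (hNk ⟨Y, hY⟩ k).2.2 (hk Y hY) β hβ

end UPAux

namespace UPAux

lemma finset_subset_mono (f : ℕ → Finset Ordinal) (hf : ∀ j k : ℕ, j ≤ k → f j ⊆ f k)
    (s : Finset Ordinal) (h : ∀ β ∈ s, ∃ n, β ∈ f n) : ∃ n, s ⊆ f n := by
  classical
  induction s using Finset.induction_on with
  | empty => exact ⟨0, by simp⟩
  | @insert a s ha ih =>
    obtain ⟨n, hn⟩ := ih (fun β hβ => h β (Finset.mem_insert_of_mem hβ))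
    obtain ⟨k, hk⟩ := h a (Finset.mem_insert_self _ _)
    refine ⟨max n k, ?_⟩
    intro β hβ
    rcases Finset.mem_insert.mp hβ with rfl | hβ
    · exact hf k _ (le_max_right _ _) hk
    · exact hf n _ (le_max_left _ _) (hn hβ)

end UPAux

/-- Lemma: for a very special problem `p` whose ladder system has
ℵ₀-uniformization there is `m̄` such that `p ∖ m̄` admits a pressed down system. -/
theorem pressedDown_exists (C : Type) [Countable C] (p : UProblem C)
    (v : Ordinal → Finset Ordinal) (hvs : p.IsVerySpecial v)
    (hunif : HasUnif p.S p.η) :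
    ∃ (m : Ordinal → ℕ) (w : Ordinal → Finset Ordinal),
      (p.drop m).PressedDown v w := by
  classical
  obtain ⟨hsp, hins, hUn, hvlt, huv⟩ := hvs
  have hlim : ∀ δ ∈ p.S, Order.IsSuccLimit δ := hsp.2.1
  have hlad : ∀ δ ∈ p.S, StrictMono (p.η δ) ∧ (∀ n, p.η δ n < δ) ∧ ∀ β < δ, ∃ n, β < p.η δ n :=
    hsp.2.2.1
  have hult : ∀ δ ∈ p.S, ∀ n : ℕ, ∀ β ∈ p.u δ n, β < p.η δ n := hsp.2.2.2.1
  have humono : ∀ δ ∈ p.S, ∀ j k : ℕ, j ≤ k → p.u δ j ⊆ p.u δ k := by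
    intro δ hδ
    have hst : ∀ n, p.u δ n ⊆ p.u δ (n + 1) := fun n =>
      Finset.Subset.trans (Finset.subset_insert _ _) (hins δ hδ n)
    intro j k hjk
    induction k with
    | zero => simpa [Nat.le_zero.mp hjk]
    | succ k ih =>
      rcases Nat.lt_or_ge j (k+1) with h | h
      · exact Finset.Subset.trans (ih (Nat.lt_succ_iff.mp h)) (hst k)
      · have : j = k + 1 := le_antisymm hjk h
        simp [this]
  -- choice of m
  have hmex : ∀ δ ∈ p.S, ∃ n : ℕ, v δ ⊆ p.u δ n := by
    intro δ hδ
    refine UPAux.finset_subset_mono (p.u δ) (humono δ hδ) (v δ) ?_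
    intro β hβ
    have : (β : Ordinal) ∈ (⋃ n, (p.u δ n : Set Ordinal)) := by
      rw [hUn δ hδ]; exact hvlt δ β hβ
    simpa using this
  set m : Ordinal → ℕ := fun δ => if h : ∃ n : ℕ, v δ ⊆ p.u δ n then h.choose else 0
    with hmdef
  have hmspec : ∀ δ ∈ p.S, v δ ⊆ p.u δ (m δ) := by
    intro δ hδ
    have h := hmex δ hδ
    simp only [hmdef, dif_pos h]
    exact h.choose_spec
  set q : UProblem C := p.drop m with hqdef
  have hqS : q.S = p.S := rfl
  have hqη : ∀ δ n, q.η δ n = p.η δ (n + m δ) := fun _ _ => rfl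
  have hqu : ∀ δ n, q.u δ n = p.u δ (n + m δ) := fun _ _ => rfl
  have hmonoq : ∀ δ ∈ q.S, StrictMono (q.η δ) := by
    intro δ hδ a b hab
    exact (hlad δ hδ).1 (by omega)
  have hltq : ∀ δ ∈ q.S, ∀ n, q.η δ n < δ := fun δ hδ n => (hlad δ hδ).2.1 _
  have hubq : ∀ δ ∈ q.S, ∀ β < δ, ∃ n, β < q.η δ n := by
    intro δ hδ β hβ
    obtain ⟨n, hn⟩ := (hlad δ hδ).2.2 β hβ
    exact ⟨n, lt_of_lt_of_le hn ((hlad δ hδ).1.monotone (by omega))⟩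
  have huq : ∀ δ ∈ q.S, ∀ n, ∀ β ∈ q.u δ n, β < q.η δ n := fun δ hδ n =>
    hult δ hδ (n + m δ)
  -- the closure operator
  set fam : Finset Ordinal → Set (Set Ordinal) :=
    fun x => {Y : Set Ordinal | ↑x ⊆ Y ∧ Y.Finite ∧ q.Closed Y} with hfamdef
  set cl : Finset Ordinal → Set Ordinal := fun x => ⋂₀ fam x with hcldef
  have hex : ∀ x : Finset Ordinal,
      ∃ Y : Finset Ordinal, x ⊆ Y ∧ (∀ β ∈ Y, ∃ γ ∈ x, β ≤ γ) ∧ q.Closed ↑Y :=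
    UPAux.exists_closed q hlim hmonoq hltq hubq huq
  have hclsub : ∀ x : Finset Ordinal, ↑x ⊆ cl x := by
    intro x β hβ Y hY
    exact hY.1 hβ
  have hclbd : ∀ x : Finset Ordinal, ∀ β ∈ cl x, ∃ γ ∈ x, β ≤ γ := by
    intro x β hβ
    obtain ⟨Y, hY1, hY2, hY3⟩ := hex x
    have hmem : (↑Y : Set Ordinal) ∈ fam x :=
      ⟨by exact_mod_cast hY1, Y.finite_toSet, hY3⟩
    exact hY2 β (by exact_mod_cast Set.sInter_subset_of_mem hmem hβ)
  have hclfin : ∀ x : Finset Ordinal, (cl x).Finite := by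
    intro x
    obtain ⟨Y, hY1, hY2, hY3⟩ := hex x
    have hmem : (↑Y : Set Ordinal) ∈ fam x :=
      ⟨by exact_mod_cast hY1, Y.finite_toSet, hY3⟩
    exact Set.Finite.subset Y.finite_toSet (Set.sInter_subset_of_mem hmem)
  have hclclosed : ∀ x : Finset Ordinal, q.Closed (cl x) := fun x =>
    UPAux.closed_sInter q (fam x) (fun Y hY => hY.2.2)
  have hclmono : ∀ x x' : Finset Ordinal, x ⊆ x' → cl x ⊆ cl x' := by
    intro x x' hxx' β hβ Y hY
    exact hβ Y ⟨Set.Subset.trans (by exact_mod_cast hxx') hY.1, hY.2⟩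
  refine ⟨m, fun α => (hclfin (v α)).toFinset, ?_, ?_, ?_⟩
  · intro α
    constructor
    · intro β hβ
      obtain ⟨γ, hγ1, hγ2⟩ := hclbd (v α) β ((hclfin (v α)).mem_toFinset.mp hβ)
      exact lt_of_le_of_lt hγ2 (hvlt α γ hγ1)
    · rw [show (↑((hclfin (v α)).toFinset) : Set Ordinal) = cl (v α) from
        (hclfin (v α)).coe_toFinset]
      exact hclclosed (v α)
  · intro δ hδ n
    constructor
    · intro β hβ
      exact (hclfin _).mem_toFinset.mpr (hclsub _ hβ)
    · intro β hβ
      have hβ' : β ∈ cl (v (p.η δ (n + m δ))) := (hclfin _).mem_toFinset.mp hβ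
      refine (hclfin _).mem_toFinset.mpr ?_
      have hvsub : v (p.η δ (n + m δ)) ⊆ v (p.η δ (n + 1 + m δ)) := by
        rw [← huv δ hδ, ← huv δ hδ]
        exact humono δ hδ _ _ (by omega)
      exact hclmono _ _ hvsub hβ'
  · intro δ hδ n β hβ
    have hβ' : β ∈ cl (v δ) := (hclfin _).mem_toFinset.mp hβ
    refine (hclfin _).mem_toFinset.mpr ?_
    have hvsub : v δ ⊆ v (p.η δ (n + m δ)) := by
      rw [← huv δ hδ]
      exact Finset.Subset.trans (hmspec δ hδ) (humono δ hδ _ _ (by omega))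
    exact hclmono _ _ hvsub hβ'
end
end
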